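/- Let f : (0,∞) → (0,∞) be continuous with F(x) = ∫_x^1 du/f(u) satisfying F(x) → +∞ as x → 0⁺, so that F is strictly decreasing with inverse F⁻¹ and F⁻¹(t) → 0 as t → ∞. If f is rapidly varying at 0 with index +∞, i.e., lim_{x→0⁺} f(λx)/f(x) = +∞ for every λ > 1 and = 0 for every λ ∈ (0,1), then F⁻¹ ∈ RV_∞(0), i.e., F⁻¹ is slowly varying at infinity. -/

import Mathlib

open Filter Real Set Topology MeasureTheory

noncomputable section

/-- A function `f : (0,∞) → (0,∞)` is regularly varying at `0` with index `β` if
`f(λx)/f(x) → λ^β` as `x → 0⁺` for every `λ > 0`. -/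
def RVat0 (f : ℝ → ℝ) (β : ℝ) : Prop :=
  ∀ lam : ℝ, 0 < lam →
    Tendsto (fun x => f (lam * x) / f x) (nhdsWithin 0 (Set.Ioi 0)) (nhds (lam ^ β))

/-- A function `h : (0,∞) → (0,∞)` is regularly varying at `∞` with index `α` if
`h(λt)/h(t) → λ^α` as `t → ∞` for every `λ > 0`. -/
def RVatInf (h : ℝ → ℝ) (α : ℝ) : Prop :=
  ∀ lam : ℝ, 0 < lam →
    Tendsto (fun t => h (lam * t) / h t) atTop (nhds (lam ^ α))

/-- A continuous solution of the perturbed ODE `x'(t) = -f(x(t)) + g(t)`, `t > 0`,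
with initial condition `x(0) = ξ`. -/
def IsSol (f g : ℝ → ℝ) (ξ : ℝ) (x : ℝ → ℝ) : Prop :=
  ContinuousOn x (Set.Ici 0) ∧ x 0 = ξ ∧
    ∀ t : ℝ, 0 < t → HasDerivAt x (-f (x t) + g t) t

/-- Key lemma: if `f` is rapidly varying at `0`, then `F(μx)/F(x) → ∞` as `x → 0⁺`
for every `μ ∈ (0,1)`. -/
lemma keyA (f F : ℝ → ℝ)
    (hf_pos : ∀ y : ℝ, 0 < y → 0 < f y)
    (hf_cont : ContinuousOn f (Set.Ioi 0))
    (hF : ∀ y : ℝ, 0 < y → F y = ∫ u in y..(1:ℝ), 1 / f u)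
    (hF_top : Tendsto F (nhdsWithin 0 (Set.Ioi 0)) atTop)
    (hrap_zero : ∀ lam : ℝ, 0 < lam → lam < 1 →
      Tendsto (fun y => f (lam * y) / f y) (nhdsWithin 0 (Set.Ioi 0)) (nhds 0))
    (μ : ℝ) (hμ0 : 0 < μ) (hμ1 : μ < 1) :
    Tendsto (fun x => F (μ * x) / F x) (nhdsWithin 0 (Set.Ioi 0)) atTop := by
  have hcont1 : ContinuousOn (fun u => 1 / f u) (Set.Ioi 0) :=
    continuousOn_const.div hf_cont (fun u hu => (hf_pos u hu).ne')
  have hint : ∀ a b : ℝ, 0 < a → 0 < b →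
      IntervalIntegrable (fun u => 1 / f u) MeasureTheory.volume a b := by
    intro a b ha hb
    apply (hcont1.mono ?_).intervalIntegrable
    intro u hu
    exact lt_of_lt_of_le (lt_min ha hb) hu.1
  rw [tendsto_atTop]
  intro b
  set C : ℝ := 2 * (|b| + 1) / μ with hCdef
  have hCpos : 0 < C := by positivity
  have hmc : μ * C = 2 * (|b| + 1) := by
    rw [hCdef]; field_simp
  have h1 : ∀ᶠ y in nhdsWithin 0 (Set.Ioi 0), f (μ * y) / f y < 1 / C :=
    (hrap_zero μ hμ0 hμ1).eventually_lt_const (by positivity)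
  obtain ⟨δ, hδ0, hδsub⟩ := mem_nhdsGT_iff_exists_Ioc_subset.1 h1
  rw [Set.mem_Ioi] at hδ0
  set d : ℝ := min δ 1 with hddef
  have hd0 : 0 < d := lt_min hδ0 one_pos
  have hd1 : d ≤ 1 := min_le_right _ _
  have hdδ : d ≤ δ := min_le_left _ _
  have hpt : ∀ v : ℝ, 0 < v → v ≤ d → C * (1 / f v) ≤ 1 / f (μ * v) := by
    intro v hv0 hvd
    have hμv : 0 < μ * v := by positivity
    have h2 : f (μ * v) / f v < 1 / C := hδsub ⟨hv0, hvd.trans hdδ⟩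
    have hfv := hf_pos v hv0
    have hfμv := hf_pos _ hμv
    rw [div_lt_div_iff₀ hfv hCpos] at h2
    rw [mul_one_div, div_le_div_iff₀ hfv hfμv]
    nlinarith
  have h3 : ∀ᶠ x in nhdsWithin 0 (Set.Ioi 0), max 1 (μ * C * |F d|) ≤ F x :=
    hF_top.eventually_ge_atTop _
  have h4 : Set.Iio d ∈ nhdsWithin (0:ℝ) (Set.Ioi 0) :=
    mem_nhdsWithin_of_mem_nhds (Iio_mem_nhds hd0)
  filter_upwards [h3, h4, self_mem_nhdsWithin] with x hFx hxd hx0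
  rw [Set.mem_Iio] at hxd
  rw [Set.mem_Ioi] at hx0
  have hμx : 0 < μ * x := by positivity
  have hμd : 0 < μ * d := by positivity
  have hI1 := hint (μ * x) (μ * d) hμx hμd
  have hI2 := hint (μ * d) 1 hμd one_pos
  have hIxd := hint x d hx0 hd0
  have hg : IntervalIntegrable (fun v => 1 / f (μ * v)) MeasureTheory.volume x d := by
    apply ContinuousOn.intervalIntegrable
    apply hcont1.comp (continuousOn_const.mul continuousOn_id)
    intro u hu
    have : 0 < u := lt_of_lt_of_le (lt_min hx0 hd0) hu.1
    exact Set.mem_Ioi.2 (mul_pos hμ0 this)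
  have key1 : F (μ * x) = (∫ u in (μ * x)..(μ * d), 1 / f u)
      + ∫ u in (μ * d)..(1:ℝ), 1 / f u := by
    rw [hF _ hμx, intervalIntegral.integral_add_adjacent_intervals hI1 hI2]
  have key2 : 0 ≤ ∫ u in (μ * d)..(1:ℝ), 1 / f u := by
    apply intervalIntegral.integral_nonneg (by nlinarith : μ * d ≤ 1)
    intro u hu
    exact one_div_nonneg.2 (hf_pos u (lt_of_lt_of_le hμd hu.1)).le
  have key3 : μ * (∫ v in x..d, 1 / f (μ * v)) = ∫ u in (μ * x)..(μ * d), 1 / f u := by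
    simpa using intervalIntegral.smul_integral_comp_mul_left
      (f := fun u => 1 / f u) (a := x) (b := d) μ
  have key4 : (∫ v in x..d, C * (1 / f v)) ≤ ∫ v in x..d, 1 / f (μ * v) := by
    apply intervalIntegral.integral_mono_on (le_of_lt hxd) (hIxd.const_mul C) hg
    intro v hv
    exact hpt v (lt_of_lt_of_le hx0 hv.1) hv.2
  have key5 : (∫ v in x..d, C * (1 / f v)) = C * (F x - F d) := by
    rw [intervalIntegral.integral_const_mul]
    congr 1
    have hadd := intervalIntegral.integral_add_adjacent_intervals hIxd (hint d 1 hd0 one_pos)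
    rw [hF x hx0, hF d hd0]
    linarith [hadd]
  have hmain : μ * (C * (F x - F d)) ≤ F (μ * x) := by
    calc μ * (C * (F x - F d)) = μ * ∫ v in x..d, C * (1 / f v) := by rw [key5]
      _ ≤ μ * ∫ v in x..d, 1 / f (μ * v) := mul_le_mul_of_nonneg_left key4 hμ0.le
      _ = ∫ u in (μ * x)..(μ * d), 1 / f u := key3
      _ ≤ F (μ * x) := by rw [key1]; linarith
  have hFx1 : 1 ≤ F x := le_trans (le_max_left _ _) hFx
  have hFx2 : μ * C * |F d| ≤ F x := le_trans (le_max_right _ _) hFx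
  have hmain2 : 2 * (|b| + 1) * (F x - F d) ≤ F (μ * x) := by
    rw [← hmc, mul_assoc]; exact hmain
  have t4 : 2 * (|b| + 1) * F d ≤ F x := by
    rw [← hmc]
    calc μ * C * F d ≤ μ * C * |F d| :=
          mul_le_mul_of_nonneg_left (le_abs_self _) (by positivity)
      _ ≤ F x := hFx2
  rw [le_div_iff₀ (by linarith : (0:ℝ) < F x)]
  have t1 : b * F x ≤ |b| * F x :=
    mul_le_mul_of_nonneg_right (le_abs_self b) (by linarith)
  have t2 : 0 ≤ |b| * F x := mul_nonneg (abs_nonneg b) (by linarith)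
  nlinarith [hmain2, t4, t1, t2]

theorem stmt_10 (f F Finv : ℝ → ℝ)
    (hf_pos : ∀ y : ℝ, 0 < y → 0 < f y)
    (hf_cont : ContinuousOn f (Set.Ioi 0))
    (hF : ∀ y : ℝ, 0 < y → F y = ∫ u in y..(1:ℝ), 1 / f u)
    (hF_top : Tendsto F (nhdsWithin 0 (Set.Ioi 0)) atTop)
    (hF_anti : StrictAntiOn F (Set.Ioi 0))
    (hFinv : ∀ t : ℝ, 0 ≤ t → 0 < Finv t ∧ F (Finv t) = t)
    (hFinv_to0 : Tendsto Finv atTop (nhds 0))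
    (hrap_top : ∀ lam : ℝ, 1 < lam →
      Tendsto (fun y => f (lam * y) / f y) (nhdsWithin 0 (Set.Ioi 0)) atTop)
    (hrap_zero : ∀ lam : ℝ, 0 < lam → lam < 1 →
      Tendsto (fun y => f (lam * y) / f y) (nhdsWithin 0 (Set.Ioi 0)) (nhds 0)) :
    RVatInf Finv 0 := by
  intro lam hlam
  rw [Real.rpow_zero, Metric.tendsto_nhds]
  intro ε hε
  set e : ℝ := min ε 1 / 2 with hedef
  have he0 : 0 < e := by positivity
  have he1 : e < 1 := by
    have : min ε 1 ≤ 1 := min_le_right _ _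
    rw [hedef]; linarith
  have heε : e < ε := by
    have : min ε 1 ≤ ε := min_le_left _ _
    rw [hedef]; linarith
  have hFinvpos : ∀ᶠ t in atTop, 0 < Finv t :=
    (eventually_ge_atTop (0:ℝ)).mono fun t ht => (hFinv t ht).1
  have hFinv' : Tendsto Finv atTop (nhdsWithin 0 (Set.Ioi 0)) :=
    tendsto_nhdsWithin_iff.2 ⟨hFinv_to0, hFinvpos.mono fun t ht => Set.mem_Ioi.2 ht⟩
  -- lower bound
  have hkey1 := (keyA f F hf_pos hf_cont hF hF_top hrap_zero (1 - e)
    (by linarith) (by linarith)).comp hFinv'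
  have hlow : ∀ᶠ t in atTop, lam < F ((1 - e) * Finv t) / F (Finv t) :=
    hkey1.eventually_gt_atTop lam
  -- upper bound
  have hup0 : Tendsto (fun t => (1 + e) * Finv t) atTop (nhdsWithin 0 (Set.Ioi 0)) := by
    apply tendsto_nhdsWithin_iff.2
    constructor
    · have := hFinv_to0.const_mul (1 + e)
      simpa using this
    · exact hFinvpos.mono fun t ht => Set.mem_Ioi.2 (by positivity)
  have hkey2 := (keyA f F hf_pos hf_cont hF hF_top hrap_zero (1 / (1 + e))
    (by positivity) (by rw [div_lt_one (by linarith)]; linarith)).comp hup0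
  have hkey2' : Tendsto (fun t => F (Finv t) / F ((1 + e) * Finv t)) atTop atTop := by
    apply hkey2.congr
    intro t
    have : 1 / (1 + e) * ((1 + e) * Finv t) = Finv t := by
      field_simp
    rw [Function.comp_apply, this]
  have hhigh : ∀ᶠ t in atTop, 2 / lam < F (Finv t) / F ((1 + e) * Finv t) :=
    hkey2'.eventually_gt_atTop _
  filter_upwards [hlow, hhigh, hFinvpos, eventually_ge_atTop (1:ℝ)] with t hl hh hpos ht1
  have ht0 : (0:ℝ) ≤ t := by linarith
  obtain ⟨hFip, hFit⟩ := hFinv t ht0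
  have hlt0 : (0:ℝ) ≤ lam * t := by positivity
  obtain ⟨hFilp, hFilt⟩ := hFinv (lam * t) hlt0
  have htpos : (0:ℝ) < t := by linarith
  have hFt_pos : 0 < F (Finv t) := by rw [hFit]; exact htpos
  -- lower: lam * t < F ((1-e) * Finv t)
  have hL : lam * t < F ((1 - e) * Finv t) := by
    have h := (lt_div_iff₀ hFt_pos).1 hl
    rwa [hFit] at h
  have hlow' : (1 - e) * Finv t < Finv (lam * t) := by
    have h := hF_anti.lt_iff_gt (Set.mem_Ioi.2 hFilp)
      (Set.mem_Ioi.2 (mul_pos (by linarith : (0:ℝ) < 1 - e) hpos))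
    rw [hFilt] at h
    exact h.1 hL
  -- upper: F ((1+e) * Finv t) < lam * t
  have hU : F ((1 + e) * Finv t) < lam * t := by
    rcases le_or_gt (F ((1 + e) * Finv t)) 0 with hc | hc
    · have := mul_pos hlam htpos; linarith
    · rw [hFit] at hh
      have h2 := (div_lt_div_iff₀ hlam hc).1 hh
      linarith
  have hupp' : Finv (lam * t) < (1 + e) * Finv t := by
    have h := hF_anti.lt_iff_gt
      (Set.mem_Ioi.2 (mul_pos (by linarith : (0:ℝ) < 1 + e) hpos)) (Set.mem_Ioi.2 hFilp)
    rw [hFilt] at h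
    exact h.1 hU
  rw [Real.dist_eq, abs_lt]
  have hr1 : Finv (lam * t) / Finv t < 1 + e := (div_lt_iff₀ hpos).2 (by linarith)
  have hr2 : 1 - e < Finv (lam * t) / Finv t := (lt_div_iff₀ hpos).2 (by linarith)
  constructor <;> linarith
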